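/- arXiv:1705.01825 — 4 statements merged into one kernel-verified Lean document; each statement's English description precedes it below -/
import Mathlib

section
/- (Lemma A.1, comparison part) Let j, j′ ∈ ℝ with j′ > j, let m be an IVP solution with parameter j and m′ an IVP solution with parameter j′ (both defined on all of [0, ℓ]). Then m(x) > m′(x) for every x ∈ (0, ℓ]; in particular m′(ℓ) < m(ℓ). -/
open Real Set Filter Topology

/-- The force profile `g(x) = ∫_{x-1}^x 1_{y ≤ ℓ/2} dy − ∫_x^{x+1} 1_{y ≤ ℓ/2} dy`. -/
noncomputable def gfun (ℓ : ℝ) (x : ℝ) : ℝ :=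
  (∫ y in (x - 1)..x, if y ≤ ℓ / 2 then (1 : ℝ) else 0) -
  (∫ y in x..(x + 1), if y ≤ ℓ / 2 then (1 : ℝ) else 0)

/-- An IVP solution with parameter `j`: a differentiable `m` on `[0, ℓ]` with `m 0 = 0`
and `m'(x) = -2j + βλ(1 - m(x)²) g(x)` on `[0, ℓ]`. -/
def IsIVPSolution (β lam ℓ j : ℝ) (m : ℝ → ℝ) : Prop :=
  m 0 = 0 ∧ ∀ x ∈ Icc (0 : ℝ) ℓ,
    HasDerivAt m (-2 * j + β * lam * (1 - m x ^ 2) * gfun ℓ x) x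

/-- A stationary solution: an IVP solution which also satisfies `m ℓ = 0`. -/
def IsStationarySolution (β lam ℓ j : ℝ) (m : ℝ → ℝ) : Prop :=
  IsIVPSolution β lam ℓ j m ∧ m ℓ = 0


/-- Lemma A.1 (comparison): if `j' > j` then the IVP solution with parameter `j'` lies
strictly below the one with parameter `j` on `(0, l]`; in particular `m' l < m l`. -/
theorem ivp_comparison (β lam ℓ : ℝ) (hβ : 0 < β) (hlam : 0 < lam) (hℓ : 2 < ℓ)
    (j j' : ℝ) (hjj : j < j') (m m' : ℝ → ℝ)
    (hm : IsIVPSolution β lam ℓ j m) (hm' : IsIVPSolution β lam ℓ j' m') :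
    (∀ x ∈ Ioc (0 : ℝ) ℓ, m' x < m x) ∧ m' ℓ < m ℓ := by
  obtain ⟨hm0, hmd⟩ := hm
  obtain ⟨hm'0, hm'd⟩ := hm'
  set u : ℝ → ℝ := fun y => m y - m' y with hu
  have hu0 : u 0 = 0 := by simp [hu, hm0, hm'0]
  have hε : (0:ℝ) < 2 * (j' - j) := by linarith
  have hud : ∀ x ∈ Icc (0:ℝ) ℓ,
      HasDerivAt u (2 * (j' - j) + β * lam * gfun ℓ x * (m' x ^ 2 - m x ^ 2)) x := by
    intro x hx
    have h := (hmd x hx).sub (hm'd x hx)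
    change HasDerivAt u _ x at h
    convert h using 1
    ring
  have key : ∀ b ∈ Ioc (0:ℝ) ℓ, 0 < u b := by
    by_contra h
    push_neg at h
    obtain ⟨b, hb, hub⟩ := h
    -- derivative of u at 0 is 2(j'-j)
    have h0 : HasDerivAt u (2 * (j' - j)) 0 := by
      have := hud 0 ⟨le_refl 0, by linarith⟩
      have e : m' 0 ^ 2 - m 0 ^ 2 = 0 := by rw [hm0, hm'0]; ring
      rw [e] at this
      simpa using this
    -- slope of u at 0 is eventually positive on the right
    have hsl0 : Tendsto (slope u 0) (𝓝[>] (0:ℝ)) (𝓝 (2 * (j' - j))) :=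
      (hasDerivAt_iff_tendsto_slope.1 h0).mono_left
        (nhdsWithin_mono _ (fun x hx => ne_of_gt hx))
    have hev0 : ∀ᶠ x in 𝓝[>] (0:ℝ), 0 < slope u 0 x :=
      hsl0.eventually (eventually_gt_nhds hε)
    obtain ⟨δ, hδ0, hδ⟩ := mem_nhdsGT_iff_exists_Ioo_subset.1 hev0
    rw [mem_Ioi] at hδ0
    have hposδ : ∀ x ∈ Ioo (0:ℝ) δ, 0 < u x := by
      intro x hx
      have hs : (0:ℝ) < slope u 0 x := hδ hx
      rw [slope_def_field] at hs
      have : 0 < (u x - u 0) / (x - 0) := hs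
      rw [hu0, sub_zero, sub_zero] at this
      have := mul_pos this hx.1
      rwa [div_mul_cancel₀] at this
      exact ne_of_gt hx.1
    have hδb : δ ≤ b := by
      by_contra hc
      push_neg at hc
      exact absurd (hposδ b ⟨hb.1, hc⟩) (not_lt.2 hub)
    -- continuity of u on [0, ℓ]
    have hcont : ∀ x ∈ Icc (0:ℝ) ℓ, ContinuousAt u x := fun x hx => (hud x hx).continuousAt
    have hIccsub : Icc δ b ⊆ Icc (0:ℝ) ℓ := Icc_subset_Icc (le_of_lt hδ0) hb.2
    have huc : ContinuousOn u (Icc δ b) := fun x hx =>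
      (hcont x (hIccsub hx)).continuousWithinAt
    set S : Set ℝ := Icc δ b ∩ u ⁻¹' Iic 0 with hS
    have hScl : IsClosed S := huc.preimage_isClosed_of_isClosed isClosed_Icc isClosed_Iic
    have hSne : S.Nonempty := ⟨b, ⟨hδb, le_refl b⟩, hub⟩
    have hSbdd : BddBelow S := ⟨δ, fun x hx => hx.1.1⟩
    have hx₀S : sInf S ∈ S := hScl.csInf_mem hSne hSbdd
    set x₀ := sInf S with hx₀
    have hx₀pos : 0 < x₀ := lt_of_lt_of_le hδ0 hx₀S.1.1
    have hx₀ℓ : x₀ ∈ Icc (0:ℝ) ℓ := hIccsub hx₀S.1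
    -- u positive on (0, x₀)
    have hpos : ∀ x ∈ Ioo (0:ℝ) x₀, 0 < u x := by
      intro x hx
      by_cases hxd : x < δ
      · exact hposδ x ⟨hx.1, hxd⟩
      · push_neg at hxd
        have hxS : x ∉ S := notMem_of_lt_csInf hx.2 hSbdd
        have : x ∈ Icc δ b := ⟨hxd, le_trans (le_of_lt hx.2) hx₀S.1.2⟩
        by_contra hc
        push_neg at hc
        exact hxS ⟨this, hc⟩
    -- u x₀ = 0
    have hux₀ : u x₀ = 0 := by
      refine le_antisymm hx₀S.2 ?_
      have htd : Tendsto u (𝓝[<] x₀) (𝓝 (u x₀)) :=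
        ((hcont x₀ hx₀ℓ).tendsto).mono_left nhdsWithin_le_nhds
      have hmem : Ioo (0:ℝ) x₀ ∈ 𝓝[<] x₀ :=
        Ioo_mem_nhdsLT_of_mem ⟨hx₀pos, le_refl x₀⟩
      exact ge_of_tendsto htd (eventually_of_mem hmem fun x hx => le_of_lt (hpos x hx))
    -- derivative of u at x₀ is 2(j'-j)
    have hdx₀ : HasDerivAt u (2 * (j' - j)) x₀ := by
      have := hud x₀ hx₀ℓ
      have e : m' x₀ ^ 2 - m x₀ ^ 2 = 0 := by
        have : m x₀ = m' x₀ := by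
          have := hux₀; simp only [hu] at this; linarith
        rw [this]; ring
      rw [e] at this
      simpa using this
    have hslx : Tendsto (slope u x₀) (𝓝[<] x₀) (𝓝 (2 * (j' - j))) :=
      (hasDerivAt_iff_tendsto_slope.1 hdx₀).mono_left
        (nhdsWithin_mono _ (fun x hx => ne_of_lt hx))
    have hevx : ∀ᶠ x in 𝓝[<] x₀, 0 < slope u x₀ x :=
      hslx.eventually (eventually_gt_nhds hε)
    have hmem : Ioo (0:ℝ) x₀ ∈ 𝓝[<] x₀ := Ioo_mem_nhdsLT_of_mem ⟨hx₀pos, le_refl x₀⟩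
    obtain ⟨x, hxsl, hxI⟩ := (hevx.and (eventually_of_mem hmem fun x hx => hx)).exists
    have hneg : slope u x₀ x < 0 := by
      have h1 : 0 < u x := hpos x hxI
      have h2 : x - x₀ < 0 := by linarith [hxI.2]
      rw [slope_def_field, hux₀, sub_zero]
      exact div_neg_of_pos_of_neg h1 h2
    linarith
  constructor
  · intro x hx
    have := key x hx
    simp only [hu] at this
    linarith
  · have := key ℓ ⟨by linarith, le_refl ℓ⟩
    simp only [hu] at this
    linarith
end

section
/- (Lemma A.1, limit as j → −∞) For every M > 0 there exists J < 0 such that for every j < J, every IVP solution m with parameter j that is defined on all of [0, ℓ] satisfies m(ℓ) > M. -/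
open Real Set

section helper
open Filter Topology MeasureTheory intervalIntegral

lemma ind_intInt (c a b : ℝ) :
    IntervalIntegrable (fun y => if y ≤ c then (1:ℝ) else 0) volume a b := by
  have heq : (fun y => if y ≤ c then (1:ℝ) else 0) = (Iic c).indicator (fun _ => (1:ℝ)) := by
    funext y; simp [Set.indicator, Set.mem_Iic]
  rw [intervalIntegrable_iff, heq]
  exact (integrableOn_const measure_Ioc_lt_top.ne).indicator measurableSet_Iic

lemma gfun_nonneg (ℓ x : ℝ) : 0 ≤ gfun ℓ x := by
  have h1 : (∫ y in x..(x + 1), if y ≤ ℓ / 2 then (1:ℝ) else 0)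
      = ∫ y in (x-1)..x, if y ≤ ℓ/2 - 1 then (1:ℝ) else 0 := by
    have := intervalIntegral.integral_comp_add_right
      (a := x - 1) (b := x) (fun y => if y ≤ ℓ / 2 then (1:ℝ) else 0) 1
    rw [show x - 1 + 1 = x by ring] at this
    rw [← this]
    congr 1; funext y
    by_cases h : y ≤ ℓ/2 - 1 <;> simp [h] <;> linarith
  rw [gfun, h1, sub_nonneg]
  apply intervalIntegral.integral_mono_on (by linarith) (ind_intInt _ _ _) (ind_intInt _ _ _)
  intro y _
  by_cases h : y ≤ ℓ/2 - 1 <;> simp [h]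
  · have : y ≤ ℓ/2 := by linarith
    simp [this]
  · split <;> norm_num

lemma gfun_le_one (ℓ x : ℝ) : gfun ℓ x ≤ 1 := by
  have h1 : (∫ y in (x - 1)..x, if y ≤ ℓ / 2 then (1:ℝ) else 0) ≤ 1 := by
    calc (∫ y in (x - 1)..x, if y ≤ ℓ / 2 then (1:ℝ) else 0)
        ≤ ∫ _y in (x - 1)..x, (1:ℝ) := by
          apply intervalIntegral.integral_mono_on (by linarith) (ind_intInt _ _ _)
            intervalIntegrable_const
          intro y _; split <;> norm_num
      _ = 1 := by simp
  have h2 : (0:ℝ) ≤ ∫ y in x..(x + 1), if y ≤ ℓ / 2 then (1:ℝ) else 0 := by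
    apply intervalIntegral.integral_nonneg (by linarith)
    intro y _; split <;> norm_num
  rw [gfun]; linarith

/-- If `f` has derivative `F` on `[a,b]`, `F` is positive wherever `f` hits level `L`,
and `f a ≥ L`, then `f ≥ L` on all of `[a,b]`. -/
lemma cross_le {f F : ℝ → ℝ} {a b L : ℝ}
    (hd : ∀ x ∈ Icc a b, HasDerivAt f (F x) x)
    (hF : ∀ x ∈ Icc a b, f x = L → 0 < F x)
    (ha : L ≤ f a) : ∀ x ∈ Icc a b, L ≤ f x := by
  by_contra h
  push_neg at h
  obtain ⟨x₁, hx₁, hfx₁⟩ := h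
  set S : Set ℝ := Icc a x₁ ∩ f ⁻¹' Ici L with hS
  have hsub : Icc a x₁ ⊆ Icc a b := Icc_subset_Icc le_rfl hx₁.2
  have hcont : ContinuousOn f (Icc a x₁) := fun x hx =>
    (hd x (hsub hx)).continuousAt.continuousWithinAt
  have hSclosed : IsClosed S := hcont.preimage_isClosed_of_isClosed isClosed_Icc isClosed_Ici
  have hSne : S.Nonempty := ⟨a, ⟨le_rfl, hx₁.1⟩, ha⟩
  have hScompact : IsCompact S :=
    isCompact_Icc.of_isClosed_subset hSclosed (inter_subset_left)
  set t := sSup S with htdef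
  have htS : t ∈ S := hScompact.sSup_mem hSne
  have htIcc : t ∈ Icc a x₁ := htS.1
  have hft : L ≤ f t := htS.2
  have htne : t ≠ x₁ := by intro h; rw [h] at hft; exact absurd hft (not_le.2 hfx₁)
  have htlt : t < x₁ := lt_of_le_of_ne htIcc.2 htne
  have hbdd : BddAbove S := hScompact.bddAbove
  have hgt : ∀ x, t < x → x ≤ x₁ → f x < L := by
    intro x hx hx1
    by_contra hge
    push_neg at hge
    have : x ∈ S := ⟨⟨htIcc.1.trans hx.le, hx1⟩, hge⟩
    exact absurd (le_csSup hbdd this) (not_le.2 hx)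
  have htb : t ∈ Icc a b := hsub htIcc
  have hmem : Ioc t x₁ ∈ 𝓝[>] t := Ioc_mem_nhdsGT_of_mem ⟨le_rfl, htlt⟩
  have hftle : f t ≤ L := by
    have hcat : Tendsto f (𝓝[>] t) (𝓝 (f t)) :=
      ((hd t htb).continuousAt.continuousWithinAt).tendsto
    refine le_of_tendsto hcat ?_
    filter_upwards [hmem] with x hx
    exact (hgt x hx.1 hx.2).le
  have hfteq : f t = L := le_antisymm hftle hft
  have hFt : 0 < F t := hF t htb hfteq
  have hslope : Tendsto (slope f t) (𝓝[>] t) (𝓝 (F t)) :=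
    (hasDerivAt_iff_tendsto_slope.1 (hd t htb)).mono_left
      (nhdsWithin_mono t (fun x hx => ne_of_gt hx))
  have : F t ≤ 0 := by
    refine le_of_tendsto hslope ?_
    filter_upwards [hmem] with x hx
    have hnum : f x - f t < 0 := by
      have := hgt x hx.1 hx.2; rw [hfteq]; linarith
    have hden : 0 < x - t := sub_pos.2 hx.1
    rw [slope_def_field]
    exact le_of_lt (div_neg_of_neg_of_pos hnum hden)
  linarith

/-- product bound : if `t ≥ -K`, `K ≥ 0`, `0 ≤ g ≤ 1` then `t * g ≥ -K`. -/
lemma prod_bound {t K g : ℝ} (ht : -K ≤ t) (hK : 0 ≤ K) (hg0 : 0 ≤ g) (hg1 : g ≤ 1) :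
    -K ≤ t * g := by
  nlinarith [mul_nonneg (by linarith : (0:ℝ) ≤ t + K) hg0, mul_nonneg hK (by linarith : (0:ℝ) ≤ 1 - g)]

end helper

/-- Lemma A.1 (limit as `j → -∞`). -/
theorem ivp_endpoint_to_top (β lam ℓ : ℝ) (hβ : 0 < β) (hlam : 0 < lam) (hℓ : 2 < ℓ) :
    ∀ M > (0 : ℝ), ∃ J < (0 : ℝ), ∀ j < J, ∀ m : ℝ → ℝ,
      IsIVPSolution β lam ℓ j m → m ℓ > M := by
  intro M hM
  set C := β * lam with hC
  have hCpos : 0 < C := mul_pos hβ hlam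
  have hℓpos : (0:ℝ) < ℓ := by linarith
  have hKpos : (0:ℝ) < (M+1)^2 := by positivity
  have hP : 0 < C*(M+1)^2 + (M+2)/ℓ := by positivity
  refine ⟨-(C*(M+1)^2 + (M+2)/ℓ)/2 - 1, by linarith, ?_⟩
  intro j hj m ⟨hm0, hderiv'⟩
  set F : ℝ → ℝ := fun x => -2 * j + C * (1 - m x ^ 2) * gfun ℓ x with hF
  have hderiv : ∀ x ∈ Icc (0:ℝ) ℓ, HasDerivAt m (F x) x := hderiv'
  have hj2 : C*(M+1)^2 + (M+2)/ℓ + 2 ≤ -2*j := by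
    have : j < -(C*(M+1)^2 + (M+2)/ℓ)/2 - 1 := hj
    linarith
  set A : ℝ := -2*j - C*(M+1)^2 with hA
  have hApos : (M+2)/ℓ + 2 ≤ A := by linarith
  have hMl : (0:ℝ) < (M+2)/ℓ := by positivity
  -- uniform lower bound for F when |m x| ≤ M+1
  have hFbound : ∀ x L', 0 ≤ L' → L' ≤ M + 1 →
      A ≤ -2 * j + C * (1 - L' ^ 2) * gfun ℓ x := by
    intro x L' h0 h1
    have ht : -(M+1)^2 ≤ 1 - L'^2 := by nlinarith
    have := prod_bound ht (le_of_lt hKpos) (gfun_nonneg ℓ x) (gfun_le_one ℓ x)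
    nlinarith [this, hCpos]
  -- Step A : m ≥ 0 on [0, ℓ]
  have hm_nonneg : ∀ x ∈ Icc (0:ℝ) ℓ, 0 ≤ m x := by
    have := cross_le (L := 0) hderiv ?_ (by rw [hm0])
    · exact this
    · intro x hx hmx
      have hg := gfun_nonneg ℓ x
      simp only [hF, hmx]
      nlinarith [mul_nonneg (le_of_lt hCpos) hg]
  -- Step B : m exceeds M somewhere
  have hexists : ∃ x₀ ∈ Icc (0:ℝ) ℓ, M < m x₀ := by
    by_contra h
    push_neg at h
    -- then F ≥ A - 0 everywhere, so m grows at least A - 1 > 0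
    set A' : ℝ := A - 1 with hA'
    have hcross := cross_le (f := fun x => m x - A' * x) (F := fun x => F x - A')
      (a := 0) (b := ℓ) (L := 0) ?_ ?_ (by simp [hm0])
    · have := hcross ℓ ⟨le_of_lt hℓpos, le_rfl⟩
      have hml : m ℓ ≤ M := h ℓ ⟨le_of_lt hℓpos, le_rfl⟩
      have hAl : (M+2)/ℓ * ℓ = M + 2 := by field_simp
      nlinarith [this, hAl, mul_nonneg (by linarith : (0:ℝ) ≤ A' - (M+2)/ℓ - 1) (le_of_lt hℓpos)]
    · intro x hx
      exact ((hderiv x hx).sub ((hasDerivAt_id x).const_mul A')).congr_deriv (by ring)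
    · intro x hx _
      have hb := hFbound x (m x) (hm_nonneg x hx) (by linarith [h x hx])
      simp only [hF] at hb ⊢
      linarith
  obtain ⟨x₀, hx₀, hmx₀⟩ := hexists
  set L' : ℝ := min (m x₀) (M + 1) with hL'
  have hL'M : M < L' := lt_min hmx₀ (by linarith)
  have hL'le : L' ≤ M + 1 := min_le_right _ _
  have hL'0 : 0 ≤ L' := le_of_lt (lt_trans hM hL'M)
  have hfin := cross_le (a := x₀) (b := ℓ) (L := L') (f := m) (F := F)
    (fun x hx => hderiv x ⟨le_trans hx₀.1 hx.1, hx.2⟩) ?_ (min_le_left _ _)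
  · have := hfin ℓ ⟨hx₀.2, le_rfl⟩
    linarith
  · intro x hx hmx
    have hb := hFbound x L' hL'0 hL'le
    simp only [hF, hmx]
    linarith
end

section
/- (Corollary A.2, a priori bound) If (j, m) is a stationary solution, then |m(x)| < 1 for all x ∈ [0, ℓ]. -/
open Real Set

section Aux

open Filter Topology

/-- If `f y < f x` for all `y` just to the right of `x`, the derivative at `x` is nonpositive. -/
lemma aux_deriv_nonpos_right {f : ℝ → ℝ} {d x b : ℝ} (hxb : x < b)
    (hf : HasDerivAt f d x) (h : ∀ y ∈ Ioc x b, f y < f x) : d ≤ 0 := by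
  have h1 : Tendsto (slope f x) (𝓝[>] x) (𝓝 d) := by
    have h2 := (hf.hasDerivWithinAt (s := Ioi x))
    rw [hasDerivWithinAt_iff_tendsto_slope' (notMem_Ioi.mpr le_rfl)] at h2
    exact h2
  refine le_of_tendsto h1 ?_
  filter_upwards [Ioc_mem_nhdsGT hxb] with y hy
  have h3 : f y - f x < 0 := sub_neg.mpr (h y hy)
  have hyx : 0 < y - x := sub_pos.mpr hy.1
  have : (f y - f x) / (y - x) ≤ 0 := le_of_lt (div_neg_of_neg_of_pos h3 hyx)
  simpa [slope_def_field, div_eq_iff, hyx.ne'] using this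

/-- If `f y < f x` for all `y` just to the left of `x`, the derivative at `x` is nonnegative. -/
lemma aux_deriv_nonneg_left {f : ℝ → ℝ} {d a x : ℝ} (hax : a < x)
    (hf : HasDerivAt f d x) (h : ∀ y ∈ Ico a x, f y < f x) : 0 ≤ d := by
  have h1 : HasDerivAt (fun y : ℝ => a + x - y) (-1) a := by
    simpa using (hasDerivAt_id a).const_sub (a + x)
  have hf' : HasDerivAt f d (a + x - a) := by rwa [show a + x - a = x by ring]
  have hg := hf'.comp a h1
  have hga : ∀ y ∈ Ioc a x, (f ∘ fun y => a + x - y) y < (f ∘ fun y => a + x - y) a := by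
    intro y hy
    have hmem : a + x - y ∈ Ico a x := ⟨by linarith [hy.2], by linarith [hy.1]⟩
    simpa [Function.comp, show a + x - a = x by ring] using h _ hmem
  have := aux_deriv_nonpos_right hax hg hga
  linarith

/-- The last crossing of level `c` by a continuous function. -/
lemma aux_exists_last_crossing {f : ℝ → ℝ} {a b c t : ℝ} (hf : ContinuousOn f (Icc a b))
    (ht : t ∈ Icc a b) (hft : c ≤ f t) (hfb : f b < c) :
    ∃ x ∈ Ico a b, f x = c ∧ ∀ y ∈ Ioc x b, f y < c := by
  have htb : t < b := lt_of_le_of_ne ht.2 (by rintro rfl; linarith)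
  set S : Set ℝ := Icc a b ∩ f ⁻¹' {c} with hS
  have hScl : IsClosed S := hf.preimage_isClosed_of_isClosed isClosed_Icc isClosed_singleton
  have hScp : IsCompact S := (isCompact_Icc).of_isClosed_subset hScl inter_subset_left
  have hSne : S.Nonempty := by
    have hsub : Icc t b ⊆ Icc a b := Icc_subset_Icc ht.1 le_rfl
    have := intermediate_value_Icc' (le_of_lt htb) (hf.mono hsub)
    obtain ⟨z, hz, hfz⟩ := this ⟨le_of_lt hfb, hft⟩
    exact ⟨z, hsub hz, hfz⟩
  set x := sSup S with hx
  have hxS : x ∈ S := hScp.sSup_mem hSne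
  have hxb : x < b := by
    rcases lt_or_eq_of_le hxS.1.2 with h | h
    · exact h
    · exfalso; have := hxS.2; rw [h] at this; simp at this; linarith
  refine ⟨x, ⟨hxS.1.1, hxb⟩, hxS.2, ?_⟩
  intro y hy
  have hyIcc : y ∈ Icc a b := ⟨le_trans hxS.1.1 (le_of_lt hy.1), hy.2⟩
  by_contra hyc
  push_neg at hyc
  rcases lt_or_eq_of_le hyc with h | h
  · have hsub : Icc y b ⊆ Icc a b := Icc_subset_Icc hyIcc.1 le_rfl
    obtain ⟨z, hz, hfz⟩ := intermediate_value_Icc' hy.2 (hf.mono hsub)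
      ⟨le_of_lt hfb, le_of_lt h⟩
    have hzS : z ∈ S := ⟨hsub hz, hfz⟩
    have := le_csSup hScp.bddAbove hzS
    have : y ≤ x := le_trans hz.1 this
    linarith [hy.1]
  · have hzS : y ∈ S := ⟨hyIcc, h.symm⟩
    have := le_csSup hScp.bddAbove hzS
    linarith [hy.1]

/-- The first crossing of level `c` by a continuous function. -/
lemma aux_exists_first_crossing {f : ℝ → ℝ} {a b c t : ℝ} (hf : ContinuousOn f (Icc a b))
    (ht : t ∈ Icc a b) (hft : c ≤ f t) (hfa : f a < c) :
    ∃ x ∈ Ioc a b, f x = c ∧ ∀ y ∈ Ico a x, f y < c := by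
  have hab : a ≤ b := ht.1.trans ht.2
  have hg : ContinuousOn (fun y => f (a + b - y)) (Icc a b) := by
    apply hf.comp (Continuous.continuousOn (by continuity))
    intro y hy; exact ⟨by linarith [hy.2], by linarith [hy.1]⟩
  have htm : a + b - t ∈ Icc a b := ⟨by linarith [ht.2], by linarith [ht.1]⟩
  have hgt : c ≤ (fun y => f (a + b - y)) (a + b - t) := by
    simpa [show a + b - (a + b - t) = t by ring] using hft
  have hgb : (fun y => f (a + b - y)) b < c := by
    simpa [show a + b - b = a by ring] using hfa
  obtain ⟨x', hx', hfx', hlt⟩ := aux_exists_last_crossing hg htm hgt hgb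
  refine ⟨a + b - x', ⟨by linarith [hx'.2], by linarith [hx'.1]⟩, hfx', ?_⟩
  intro y hy
  have hmem : a + b - y ∈ Ioc x' b := ⟨by linarith [hy.2], by linarith [hy.1]⟩
  simpa [show a + b - (a + b - y) = y by ring] using hlt _ hmem

/-- Grönwall-type uniqueness, run backwards in time: if `|f'| ≤ K |f|` on `[a, b]` and
`f b = 0`, then `f a = 0`. -/
lemma aux_gronwall_zero {f f' : ℝ → ℝ} {a b K : ℝ} (hab : a ≤ b)
    (hd : ∀ x ∈ Icc a b, HasDerivAt f (f' x) x)
    (hbound : ∀ x ∈ Icc a b, |f' x| ≤ K * |f x|) (hfb : f b = 0) : f a = 0 := by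
  set g : ℝ → ℝ := fun t => f (a + b - t) with hg
  have hgd : ∀ t ∈ Icc a b, HasDerivAt g (-(f' (a + b - t))) t := by
    intro t ht
    have h1 : HasDerivAt (fun y : ℝ => a + b - y) (-1) t := by
      simpa using (hasDerivAt_id t).const_sub (a + b)
    have h2 : a + b - t ∈ Icc a b := ⟨by linarith [ht.2], by linarith [ht.1]⟩
    have := (hd _ h2).comp t h1
    have e : -(f' (a + b - t)) = f' (a + b - t) * -1 := by ring
    rw [e]; exact this
  have hcont : ContinuousOn g (Icc a b) := fun x hx => (hgd x hx).continuousAt.continuousWithinAt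
  have key := norm_le_gronwallBound_of_norm_deriv_right_le (K := K) (δ := 0) (ε := 0)
    hcont (fun x hx => (hgd x (Ico_subset_Icc_self hx)).hasDerivWithinAt)
    (by simp [hg, show a + b - a = b by ring, hfb])
    (fun x hx => by
      have h2 : a + b - x ∈ Icc a b := ⟨by linarith [hx.2], by linarith [hx.1]⟩
      have := hbound _ h2
      simpa [hg, Real.norm_eq_abs] using this)
  have h := key b (right_mem_Icc.mpr hab)
  rw [gronwallBound_ε0] at h
  simp only [hg, show a + b - b = a by ring, Real.norm_eq_abs, zero_mul] at h
  exact abs_eq_zero.mp (le_antisymm h (abs_nonneg _))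

/-- Bound on the force profile: `|g| ≤ 2`. -/
lemma aux_abs_gfun_le (ℓ x : ℝ) : |gfun ℓ x| ≤ 2 := by
  have h : ∀ a b : ℝ, ‖∫ y in a..b, (if y ≤ ℓ/2 then (1:ℝ) else 0)‖ ≤ 1 * |b - a| := fun a b =>
    intervalIntegral.norm_integral_le_of_norm_le_const (fun y _ => by split <;> simp)
  have ha := h (x-1) x
  have hb := h x (x+1)
  rw [show x - (x-1) = 1 by ring] at ha
  rw [show x + 1 - x = 1 by ring] at hb
  simp only [abs_one, mul_one] at ha hb
  rw [Real.norm_eq_abs] at ha hb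
  have habs : |gfun ℓ x| ≤ |(∫ y in (x - 1)..x, if y ≤ ℓ / 2 then (1 : ℝ) else 0)| +
      |(∫ y in x..(x + 1), if y ≤ ℓ / 2 then (1 : ℝ) else 0)| := abs_sub _ _
  linarith

/-- Key step: a solution of `m' = -2j + c(x)(1 - m²)` with `m 0 = m ℓ = 0` and `c` bounded
cannot reach the level `1`. -/
lemma aux_key {ℓ j B : ℝ} {c m : ℝ → ℝ}
    (hm0 : m 0 = 0) (hmℓ : m ℓ = 0)
    (hd : ∀ x ∈ Icc (0:ℝ) ℓ, HasDerivAt m (-2 * j + c x * (1 - m x ^ 2)) x)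
    (hcB : ∀ x, |c x| ≤ B)
    {t : ℝ} (ht : t ∈ Icc (0:ℝ) ℓ) (h1t : 1 ≤ m t) : False := by
  have hcont : ContinuousOn m (Icc 0 ℓ) :=
    fun x hx => (hd x hx).continuousAt.continuousWithinAt
  -- last crossing of level 1 : gives -2j ≤ 0
  obtain ⟨x₂, hx₂, hmx₂, hlt₂⟩ := aux_exists_last_crossing hcont ht h1t (by rw [hmℓ]; norm_num)
  have hd₂ : HasDerivAt m (-2 * j) x₂ := by
    have := hd x₂ (Ico_subset_Icc_self hx₂)
    rw [hmx₂] at this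
    simpa using this
  have h2 : -2 * j ≤ 0 :=
    aux_deriv_nonpos_right hx₂.2 hd₂ (fun y hy => by rw [hmx₂]; exact hlt₂ y hy)
  -- first crossing of level 1 : gives -2j ≥ 0
  obtain ⟨x₁, hx₁, hmx₁, hlt₁⟩ := aux_exists_first_crossing hcont ht h1t (by rw [hm0]; norm_num)
  have hd₁ : HasDerivAt m (-2 * j) x₁ := by
    have := hd x₁ (Ioc_subset_Icc_self hx₁)
    rw [hmx₁] at this
    simpa using this
  have h3 : 0 ≤ -2 * j :=
    aux_deriv_nonneg_left hx₁.1 hd₁ (fun y hy => by rw [hmx₁]; exact hlt₁ y hy)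
  have hj : j = 0 := by linarith
  -- Grönwall on [0, x₁] for f = m - 1
  have hsub : Icc (0:ℝ) x₁ ⊆ Icc 0 ℓ := Icc_subset_Icc le_rfl hx₁.2
  obtain ⟨C, hC⟩ := (isCompact_Icc (a := (0:ℝ)) (b := x₁)).exists_bound_of_continuousOn
    (hcont.mono hsub)
  have hC0 : 0 ≤ C := le_trans (norm_nonneg _) (hC 0 ⟨le_rfl, le_of_lt hx₁.1⟩)
  have hB0 : 0 ≤ B := le_trans (abs_nonneg _) (hcB 0)
  have hd' : ∀ x ∈ Icc (0:ℝ) x₁, HasDerivAt (fun x => m x - 1) (c x * (1 - m x ^ 2)) x := by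
    intro x hx
    have := (hd x (hsub hx)).sub_const 1
    rw [hj] at this
    simpa using this
  have hbound : ∀ x ∈ Icc (0:ℝ) x₁,
      |c x * (1 - m x ^ 2)| ≤ (B * (1 + C)) * |m x - 1| := by
    intro x hx
    have hCx : |m x| ≤ C := by simpa [Real.norm_eq_abs] using hC x hx
    have h1 : |1 - m x ^ 2| = |m x - 1| * |1 + m x| := by
      rw [← abs_mul]
      have : 1 - m x ^ 2 = -((m x - 1) * (1 + m x)) := by ring
      rw [this, abs_neg]
    have h2 : |1 + m x| ≤ 1 + C := by
      calc |1 + m x| ≤ |(1:ℝ)| + |m x| := abs_add_le _ _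
        _ ≤ 1 + C := by rw [abs_one]; linarith
    calc |c x * (1 - m x ^ 2)| = |c x| * (|m x - 1| * |1 + m x|) := by rw [abs_mul, h1]
      _ ≤ B * (|m x - 1| * (1 + C)) := by
          apply mul_le_mul (hcB x) _ (mul_nonneg (abs_nonneg _) (abs_nonneg _)) hB0
          exact mul_le_mul_of_nonneg_left h2 (abs_nonneg _)
      _ = (B * (1 + C)) * |m x - 1| := by ring
  have hz : m 0 - 1 = 0 :=
    aux_gronwall_zero (f := fun x => m x - 1) (f' := fun x => c x * (1 - m x ^ 2))
      (a := 0) (b := x₁) (le_of_lt hx₁.1) hd' hbound (by simp [hmx₁])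
  rw [hm0] at hz
  norm_num at hz

end Aux

/-- Corollary A.2 (a priori bound `|m| < 1`). -/
theorem stationary_abs_lt_one (β lam ℓ : ℝ) (hβ : 0 < β) (hlam : 0 < lam) (hℓ : 2 < ℓ)
    (j : ℝ) (m : ℝ → ℝ) (hm : IsStationarySolution β lam ℓ j m) :
    ∀ x ∈ Icc (0 : ℝ) ℓ, |m x| < 1 := by
  obtain ⟨⟨hm0, hderiv⟩, hmℓ⟩ := hm
  by_contra hcon
  push_neg at hcon
  obtain ⟨t, ht, h1t⟩ := hcon
  have hcB : ∀ x : ℝ, |β * lam * gfun ℓ x| ≤ 2 * (β * lam) := by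
    intro x
    rw [abs_mul, abs_of_pos (mul_pos hβ hlam)]
    calc β * lam * |gfun ℓ x| ≤ β * lam * 2 :=
          mul_le_mul_of_nonneg_left (aux_abs_gfun_le ℓ x) (le_of_lt (mul_pos hβ hlam))
      _ = 2 * (β * lam) := by ring
  rcases le_abs'.mp h1t with h | h
  · -- m t ≤ -1 : apply the key lemma to -m
    refine aux_key (ℓ := ℓ) (j := -j) (B := 2 * (β * lam)) (c := fun x => -(β * lam * gfun ℓ x))
      (m := fun x => -m x) (by simp [hm0]) (by simp [hmℓ]) ?_ (fun x => by
        simpa [abs_neg] using hcB x) ht (show (1:ℝ) ≤ -m t by linarith)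
    intro x hx
    have : HasDerivAt (fun x => -m x) _ x := (hderiv x hx).neg
    convert this using 1
    ring
  · -- 1 ≤ m t : apply the key lemma to m
    refine aux_key (ℓ := ℓ) (j := j) (B := 2 * (β * lam)) (c := fun x => β * lam * gfun ℓ x)
      (m := m) hm0 hmℓ ?_ hcB ht h
    intro x hx
    have := hderiv x hx
    convert this using 1
    ring
end

section
/- (Lemma A.4, Gronwall comparison with the boundary layer) Let (j, m) be a stationary solution, so that j > 0 and |m| < 1 on [0, ℓ] and in particular α := m(ℓ/2 − 1) ∈ (−1, 1). Let a : [−1, 1] → ℝ be defined by a(x) = tanh(β(λ/2)(1 + x)² + artanh(α)) for x ∈ [−1, 0] and a(x) = tanh(β(λ/2)(1 − (1 − x)²) + artanh(a(0))) for x ∈ (0, 1]. Then sup_{|x| ≤ 1} |m(ℓ/2 + x) − a(x)| ≤ (j/(βλ)) e^{4βλ}. -/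
open Real Set

/-- The tent profile `h(x) = 1 + x` on `[-1, 0]`, `1 - x` on `(0, 1]`. -/
noncomputable def hfun (x : ℝ) : ℝ := if x ≤ 0 then 1 + x else 1 - x

/-- The inverse hyperbolic tangent on `(-1, 1)`. -/
noncomputable def artanh (x : ℝ) : ℝ := (1 / 2) * Real.log ((1 + x) / (1 - x))

/-- The explicit boundary-layer solution (A.9) with initial value `α` at `x = -1`. -/
noncomputable def blayer (β lam α : ℝ) (x : ℝ) : ℝ :=
  if x ≤ 0 then Real.tanh (β * (lam / 2) * (1 + x) ^ 2 + _root_.artanh α)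
  else Real.tanh (β * (lam / 2) * (1 - (1 - x) ^ 2) +
    _root_.artanh (Real.tanh (β * (lam / 2) * (1 + 0) ^ 2 + _root_.artanh α)))

/-! ### Auxiliary lemmas -/

lemma indic_ii (c a b : ℝ) :
    IntervalIntegrable (fun y => if y ≤ c then (1:ℝ) else 0) MeasureTheory.volume a b := by
  apply Antitone.intervalIntegrable
  intro u v huv
  by_cases h : v ≤ c
  · simp [h, huv.trans h]
  · by_cases h' : u ≤ c <;> simp [h, h']

lemma integral_indic_left {c a b : ℝ} (hab : a ≤ b) (hbc : b ≤ c) :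
    ∫ y in a..b, (if y ≤ c then (1:ℝ) else 0) = min b c - min a c := by
  rw [intervalIntegral.integral_congr (g := fun _ => (1:ℝ))
    (fun y hy => by
      rw [uIcc_of_le hab] at hy
      exact if_pos (hy.2.trans hbc))]
  rw [intervalIntegral.integral_const, min_eq_left hbc, min_eq_left (hab.trans hbc)]
  simp

lemma integral_indic_right {c a b : ℝ} (hab : a ≤ b) (hca : c ≤ a) :
    ∫ y in a..b, (if y ≤ c then (1:ℝ) else 0) = min b c - min a c := by
  rw [intervalIntegral.integral_congr_ae (g := fun _ => (0:ℝ))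
    (Filter.Eventually.of_forall (fun y hy => by
      rw [uIoc_of_le hab] at hy
      exact if_neg (by linarith [hy.1])))]
  rw [intervalIntegral.integral_zero, min_eq_right (hca.trans hab), min_eq_right hca]
  ring

lemma integral_indic (c : ℝ) {a b : ℝ} (hab : a ≤ b) :
    ∫ y in a..b, (if y ≤ c then (1:ℝ) else 0) = min b c - min a c := by
  rcases le_or_gt b c with hbc | hbc
  · exact integral_indic_left hab hbc
  rcases le_or_gt c a with hca | hca
  · exact integral_indic_right hab hca
  rw [← intervalIntegral.integral_add_adjacent_intervals (b := c) (indic_ii c a c) (indic_ii c c b),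
    integral_indic_left hca.le le_rfl, integral_indic_right hbc.le le_rfl]
  ring

lemma gfun_eq (ℓ x : ℝ) : gfun ℓ x =
    (min x (ℓ/2) - min (x-1) (ℓ/2)) - (min (x+1) (ℓ/2) - min x (ℓ/2)) := by
  unfold gfun
  rw [integral_indic _ (by linarith : x - 1 ≤ x), integral_indic _ (by linarith : x ≤ x + 1)]

lemma gfun_left {ℓ x : ℝ} (h : x ≤ ℓ/2 - 1) : gfun ℓ x = 0 := by
  rw [gfun_eq, min_eq_left (by linarith : x ≤ ℓ/2), min_eq_left (by linarith : x - 1 ≤ ℓ/2),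
    min_eq_left (by linarith : x + 1 ≤ ℓ/2)]
  ring

lemma gfun_right {ℓ x : ℝ} (h : ℓ/2 + 1 ≤ x) : gfun ℓ x = 0 := by
  rw [gfun_eq, min_eq_right (by linarith : ℓ/2 ≤ x), min_eq_right (by linarith : ℓ/2 ≤ x - 1),
    min_eq_right (by linarith : ℓ/2 ≤ x + 1)]
  ring

lemma gfun_bump {ℓ t : ℝ} (h1 : -1 ≤ t) (h2 : t ≤ 1) : gfun ℓ (ℓ/2 + t) = hfun t := by
  rw [gfun_eq]
  rcases le_or_gt t 0 with ht | ht
  · rw [min_eq_left (by linarith : ℓ/2 + t ≤ ℓ/2),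
      min_eq_left (by linarith : ℓ/2 + t - 1 ≤ ℓ/2),
      min_eq_right (by linarith : ℓ/2 ≤ ℓ/2 + t + 1), hfun, if_pos ht]
    ring
  · rw [min_eq_right (by linarith : ℓ/2 ≤ ℓ/2 + t),
      min_eq_left (by linarith : ℓ/2 + t - 1 ≤ ℓ/2),
      min_eq_right (by linarith : ℓ/2 ≤ ℓ/2 + t + 1), hfun, if_neg (not_le.mpr ht)]
    ring

lemma hfun_le_one (x : ℝ) : hfun x ≤ 1 := by unfold hfun; split_ifs <;> linarith
lemma hfun_nonneg {x : ℝ} (h1 : -1 ≤ x) (h2 : x ≤ 1) : 0 ≤ hfun x := by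
  unfold hfun; split_ifs <;> linarith
lemma hfun_cont : Continuous hfun := by
  unfold hfun
  exact Continuous.if_le (by continuity) (by continuity) continuous_id continuous_const
    (fun x hx => by simp [hx])

lemma one_add_tanh (y : ℝ) : 1 + Real.tanh y = Real.exp y / Real.cosh y := by
  rw [Real.tanh_eq_sinh_div_cosh, ← Real.cosh_add_sinh]
  field_simp [(Real.cosh_pos y).ne']

lemma one_sub_tanh (y : ℝ) : 1 - Real.tanh y = Real.exp (-y) / Real.cosh y := by
  rw [Real.tanh_eq_sinh_div_cosh, ← Real.cosh_sub_sinh]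
  field_simp [(Real.cosh_pos y).ne']

lemma mytanh_lt_one (y : ℝ) : Real.tanh y < 1 := by
  have h := one_sub_tanh y
  have : 0 < Real.exp (-y) / Real.cosh y := div_pos (Real.exp_pos _) (Real.cosh_pos _)
  linarith

lemma neg_one_lt_mytanh (y : ℝ) : -1 < Real.tanh y := by
  have h := one_add_tanh y
  have : 0 < Real.exp y / Real.cosh y := div_pos (Real.exp_pos _) (Real.cosh_pos _)
  linarith

lemma my_artanh_tanh (y : ℝ) : _root_.artanh (Real.tanh y) = y := by
  unfold _root_.artanh
  rw [one_add_tanh, one_sub_tanh]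
  have hc := (Real.cosh_pos y).ne'
  have : Real.exp y / Real.cosh y / (Real.exp (-y) / Real.cosh y) = Real.exp (2*y) := by
    have h2 : Real.exp (2*y) * Real.exp (-y) = Real.exp y := by
      rw [← Real.exp_add]; ring_nf
    field_simp
    rw [mul_comm y 2]
    linear_combination -h2
  rw [this, Real.log_exp]
  ring

lemma my_tanh_artanh {α : ℝ} (h1 : -1 < α) (h2 : α < 1) : Real.tanh (_root_.artanh α) = α := by
  set z := _root_.artanh α with hz
  have hR : (0:ℝ) < (1 + α) / (1 - α) := div_pos (by linarith) (by linarith)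
  have hexp : Real.exp (2 * z) = (1 + α)/(1 - α) := by
    rw [hz]; unfold _root_.artanh
    rw [show 2 * (1/2 * Real.log ((1+α)/(1-α))) = Real.log ((1+α)/(1-α)) by ring,
      Real.exp_log hR]
  have hc := (Real.cosh_pos z).ne'
  have e1 : (1 + Real.tanh z) * Real.cosh z = Real.exp z := by
    rw [one_add_tanh]; field_simp
  have e2 : (1 - Real.tanh z) * Real.cosh z = Real.exp (-z) := by
    rw [one_sub_tanh]; field_simp
  have e3 : Real.exp z = ((1 + α)/(1 - α)) * Real.exp (-z) := by
    rw [← hexp, ← Real.exp_add]; ring_nf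
  have e4 : (1 + Real.tanh z) * (1 - α) = (1 + α) * (1 - Real.tanh z) := by
    have h5 : (1 + Real.tanh z) * Real.cosh z * (1 - α)
        = (1 + α) * ((1 - Real.tanh z) * Real.cosh z) := by
      have hα : (1:ℝ) - α ≠ 0 := ne_of_gt (by linarith)
      rw [e1, e2, e3]; field_simp
    exact mul_right_cancel₀ hc (by linear_combination h5)
  linear_combination e4 / 2

lemma my_hasDerivAt_tanh (y : ℝ) : HasDerivAt Real.tanh (1 - Real.tanh y ^ 2) y := by
  have hfn : Real.tanh = fun x => Real.sinh x / Real.cosh x :=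
    funext fun x => Real.tanh_eq_sinh_div_cosh x
  have h := (Real.hasDerivAt_sinh y).div (Real.hasDerivAt_cosh y) (Real.cosh_pos y).ne'
  rw [hfn]
  refine h.congr_deriv ?_
  have hc := (Real.cosh_pos y).ne'
  field_simp

noncomputable def psiq (k : ℝ) (x : ℝ) : ℝ := if x ≤ 0 then k*(1+x)^2 else k*(2-(1-x)^2)

lemma hasDerivAt_q1 (k x : ℝ) : HasDerivAt (fun x : ℝ => k*(1+x)^2) (2*k*(1+x)) x := by
  have h1 : HasDerivAt (fun x : ℝ => 1 + x) 1 x := (hasDerivAt_id x).const_add 1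
  have h2 := (h1.pow 2).const_mul k
  refine h2.congr_deriv ?_
  simp; ring

lemma hasDerivAt_q2 (k x : ℝ) : HasDerivAt (fun x : ℝ => k*(2-(1-x)^2)) (2*k*(1-x)) x := by
  have h1 : HasDerivAt (fun x : ℝ => 1 - x) (-1) x := by
    simpa using (hasDerivAt_id x).const_sub 1
  have h2 := ((h1.pow 2).const_sub 2).const_mul k
  refine h2.congr_deriv ?_
  simp; ring

lemma hasDerivAt_psiq (k x : ℝ) : HasDerivAt (psiq k) (2*k*hfun x) x := by
  rcases lt_trichotomy x 0 with hx | hx | hx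
  · have heq : psiq k =ᶠ[nhds x] (fun x : ℝ => k*(1+x)^2) := by
      filter_upwards [Iio_mem_nhds hx] with y hy
      exact if_pos (le_of_lt hy)
    rw [show hfun x = 1 + x from if_pos hx.le]
    exact (hasDerivAt_q1 k x).congr_of_eventuallyEq heq
  · subst hx
    have hIic : HasDerivWithinAt (psiq k) (2*k*1) (Iic 0) 0 := by
      have := (hasDerivAt_q1 k 0).hasDerivWithinAt (s := Iic 0)
      refine (this.congr (fun y hy => if_pos (mem_Iic.mp hy)) (by norm_num [psiq])).congr_deriv ?_
      norm_num
    have hIci : HasDerivWithinAt (psiq k) (2*k*1) (Ici 0) 0 := by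
      have := (hasDerivAt_q2 k 0).hasDerivWithinAt (s := Ici 0)
      have h2 : ∀ y ∈ Ici (0:ℝ), psiq k y = k*(2-(1-y)^2) := by
        intro y hy
        rcases eq_or_lt_of_le (mem_Ici.mp hy) with h | h
        · rw [psiq, ← h]; norm_num
        · exact if_neg (not_le.mpr h)
      refine (this.congr h2 (h2 0 (mem_Ici.mpr le_rfl))).congr_deriv ?_
      norm_num
    have := hIic.union hIci
    rw [Iic_union_Ici, hasDerivWithinAt_univ] at this
    rw [show hfun 0 = 1 by norm_num [hfun]]
    exact this
  · have heq : psiq k =ᶠ[nhds x] (fun x : ℝ => k*(2-(1-x)^2)) := by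
      filter_upwards [Ioi_mem_nhds hx] with y hy
      exact if_neg (not_le.mpr hy)
    rw [show hfun x = 1 - x from if_neg (not_le.mpr hx)]
    exact (hasDerivAt_q2 k x).congr_of_eventuallyEq heq

lemma blayer_eq (β lam α : ℝ) (h1 : -1 < α) (h2 : α < 1) (x : ℝ) :
    blayer β lam α x = Real.tanh (psiq (β*(lam/2)) x + _root_.artanh α) := by
  unfold blayer psiq
  by_cases hx : x ≤ 0
  · rw [if_pos hx, if_pos hx]
  · rw [if_neg hx, if_neg hx]
    rw [show β * (lam / 2) * (1 + 0) ^ 2 + _root_.artanh α = β * (lam/2) + _root_.artanh α by ring,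
      my_artanh_tanh]
    congr 1
    ring

lemma hasDerivAt_blayer (β lam α : ℝ) (h1 : -1 < α) (h2 : α < 1) (x : ℝ) :
    HasDerivAt (blayer β lam α) (β*lam*(1 - (blayer β lam α x)^2) * hfun x) x := by
  have hb : blayer β lam α = fun x => Real.tanh (psiq (β*(lam/2)) x + _root_.artanh α) :=
    funext (blayer_eq β lam α h1 h2)
  rw [hb]
  have hd := (my_hasDerivAt_tanh (psiq (β*(lam/2)) x + _root_.artanh α)).comp x
    ((hasDerivAt_psiq (β*(lam/2)) x).add_const (_root_.artanh α))
  have : (fun x => Real.tanh (psiq (β*(lam/2)) x + _root_.artanh α)) =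
      Real.tanh ∘ (fun x => psiq (β*(lam/2)) x + _root_.artanh α) := rfl
  rw [this]
  refine hd.congr_deriv ?_
  simp only [Function.comp_apply]
  ring

lemma abs_blayer_le_one (β lam α x : ℝ) : |blayer β lam α x| ≤ 1 := by
  unfold blayer
  split_ifs <;>
    exact abs_le.mpr ⟨le_of_lt (neg_one_lt_mytanh _), le_of_lt (mytanh_lt_one _)⟩

lemma blayer_neg_one {β lam α : ℝ} (h1 : -1 < α) (h2 : α < 1) : blayer β lam α (-1) = α := by
  unfold blayer
  rw [if_pos (by norm_num : (-1:ℝ) ≤ 0),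
    show β * (lam / 2) * (1 + (-1)) ^ 2 + _root_.artanh α = _root_.artanh α by ring]
  exact my_tanh_artanh h1 h2

lemma barrier {F F' : ℝ → ℝ} {a b L δ : ℝ} (hab : a ≤ b) (hδ : 0 < δ)
    (hFc : ContinuousOn F (Icc a b))
    (hF' : ∀ x ∈ Ico a b, HasDerivWithinAt F (F' x) (Ici x) x)
    (ha : F a ≤ L)
    (hbound : ∀ x ∈ Ico a b, ∀ ε : ℝ, 0 < ε → ε * Real.exp b ≤ δ →
      F x = L + ε * Real.exp x → F' x < ε * Real.exp x) :
    ∀ x ∈ Icc a b, F x ≤ L := by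
  have key : ∀ ε : ℝ, 0 < ε → ε * Real.exp b ≤ δ → ∀ x ∈ Icc a b, F x ≤ L + ε * Real.exp x := by
    intro ε hε hεb x hx
    refine image_le_of_deriv_right_lt_deriv_boundary (B := fun y => L + ε * Real.exp y)
      (B' := fun y => ε * Real.exp y) hFc hF' ?_
      (fun y => ((Real.hasDerivAt_exp y).const_mul ε).const_add L) ?_ hx
    · show F a ≤ L + ε * Real.exp a
      have : 0 < ε * Real.exp a := by positivity
      linarith
    · exact fun y hy hFy => hbound y hy ε hε hεb hFy
  intro x hx
  by_contra hc
  push_neg at hc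
  have hex : 0 < Real.exp x := Real.exp_pos x
  set ε := min (δ * Real.exp (-b)) ((F x - L)/(2 * Real.exp x)) with hεdef
  have hε : 0 < ε := lt_min (by positivity) (div_pos (by linarith) (by positivity))
  have h1 : ε * Real.exp b ≤ δ := by
    calc ε * Real.exp b ≤ δ * Real.exp (-b) * Real.exp b :=
          mul_le_mul_of_nonneg_right (min_le_left _ _) (Real.exp_pos b).le
      _ = δ := by rw [mul_assoc, ← Real.exp_add]; simp
  have h2 := key ε hε h1 x hx
  have h3 : ε * Real.exp x ≤ (F x - L)/2 := by
    calc ε * Real.exp x ≤ (F x - L)/(2*Real.exp x) * Real.exp x :=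
          mul_le_mul_of_nonneg_right (min_le_right _ _) hex.le
      _ = (F x - L)/2 := by field_simp
  linarith

lemma exists_right_lt {f : ℝ → ℝ} {x d : ℝ} (hf : HasDerivAt f d x) (hd : d < 0)
    {b : ℝ} (hb : x < b) : ∃ y, x < y ∧ y < b ∧ f y < f x := by
  have h := hasDerivAt_iff_tendsto_slope.mp hf
  have hev : ∀ᶠ y in nhdsWithin x {x}ᶜ, slope f x y < 0 := h.eventually (Iio_mem_nhds hd)
  have hev' : ∀ᶠ y in nhdsWithin x (Ioi x), slope f x y < 0 :=
    hev.filter_mono (nhdsWithin_mono x (fun y hy => ne_of_gt (mem_Ioi.mp hy)))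
  have hio : Ioo x b ∈ nhdsWithin x (Ioi x) := Ioo_mem_nhdsGT_of_mem ⟨le_rfl, hb⟩
  obtain ⟨y, hy1, hy2⟩ := (hev'.and (Filter.eventually_of_mem hio (fun y hy => hy))).exists
  refine ⟨y, hy2.1, hy2.2, ?_⟩
  have hxy : 0 < y - x := by linarith [hy2.1]
  rw [slope_def_field] at hy1
  by_contra hcon
  push_neg at hcon
  have : 0 ≤ (f y - f x) / (y - x) := div_nonneg (by linarith) hxy.le
  linarith

set_option maxHeartbeats 1000000 in
/-- Lemma A.4: the stationary profile near the weld is within `(j/(βλ)) e^{4βλ}`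
of the explicit boundary-layer solution started from `α = m(l/2 - 1)`. -/
theorem stationary_close_to_blayer (β lam ℓ : ℝ) (hβ : 0 < β) (hlam : 0 < lam) (hℓ : 4 < ℓ)
    (j : ℝ) (m : ℝ → ℝ) (hm : IsStationarySolution β lam ℓ j m) :
    ∀ x ∈ Icc (-1 : ℝ) 1,
      |m (ℓ / 2 + x) - blayer β lam (m (ℓ / 2 - 1)) x| ≤
        j / (β * lam) * Real.exp (4 * β * lam) := by
  obtain ⟨⟨hm0, hderiv⟩, hml⟩ := hm
  have hbl : 0 < β * lam := mul_pos hβ hlam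
  have hcont : ContinuousOn m (Icc 0 ℓ) :=
    fun x hx => (hderiv x hx).continuousAt.continuousWithinAt
  -- derivative on the bump, in terms of hfun
  have mder : ∀ x ∈ Icc (ℓ/2-1) (ℓ/2+1),
      HasDerivAt m (-2*j + β*lam*(1 - m x^2) * hfun (x - ℓ/2)) x := by
    intro x hx
    have h1 := hderiv x ⟨by linarith [hx.1], by linarith [hx.2]⟩
    have h2 : gfun ℓ x = hfun (x - ℓ/2) := by
      have := gfun_bump (ℓ := ℓ) (t := x - ℓ/2) (by linarith [hx.1]) (by linarith [hx.2])
      rwa [show ℓ/2 + (x - ℓ/2) = x by ring] at this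
    rwa [h2] at h1
  -- m is linear on the left flat region
  have hlinL : ∀ x ∈ Icc (0:ℝ) (ℓ/2-1), m x = -2*j*x := by
    have hd : ∀ x ∈ Ico (0:ℝ) (ℓ/2-1), HasDerivWithinAt m (-2*j) (Ici x) x := by
      intro x hx
      have h1 := hderiv x ⟨hx.1, by linarith [hx.2]⟩
      have h2 : HasDerivAt m (-2*j) x := by
        rw [gfun_left (le_of_lt hx.2)] at h1
        convert h1 using 1; ring
      exact h2.hasDerivWithinAt
    have hd2 : ∀ x ∈ Ico (0:ℝ) (ℓ/2-1),
        HasDerivWithinAt (fun x : ℝ => -2*j*x) (-2*j) (Ici x) x := by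
      intro x _
      have : HasDerivAt (fun x : ℝ => -2*j*x) (-2*j) x := by
        simpa using (hasDerivAt_id x).const_mul (-2*j)
      exact this.hasDerivWithinAt
    exact eq_of_has_deriv_right_eq hd hd2
      (hcont.mono (Icc_subset_Icc le_rfl (by linarith)))
      (by fun_prop) (by simp [hm0])
  have hα_eq : m (ℓ/2-1) = -2*j*(ℓ/2-1) := hlinL _ ⟨by linarith, le_rfl⟩
  -- m is linear on the right flat region; value at ℓ/2+1
  have hmc1 : m (ℓ/2+1) = 2*j*(ℓ/2-1) := by
    have hlinR : ∀ x ∈ Icc (ℓ/2+1) ℓ, m x = m (ℓ/2+1) + -2*j*(x - (ℓ/2+1)) := by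
      have hd : ∀ x ∈ Ico (ℓ/2+1) ℓ, HasDerivWithinAt m (-2*j) (Ici x) x := by
        intro x hx
        have h1 := hderiv x ⟨by linarith [hx.1], (hx.2).le⟩
        have h2 : HasDerivAt m (-2*j) x := by
          rw [gfun_right hx.1] at h1
          convert h1 using 1; ring
        exact h2.hasDerivWithinAt
      have hd2 : ∀ x ∈ Ico (ℓ/2+1) ℓ,
          HasDerivWithinAt (fun x : ℝ => m (ℓ/2+1) + -2*j*(x - (ℓ/2+1))) (-2*j) (Ici x) x := by
        intro x _
        have : HasDerivAt (fun x : ℝ => m (ℓ/2+1) + -2*j*(x - (ℓ/2+1))) (-2*j) x := by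
          simpa using (((hasDerivAt_id x).sub_const (ℓ/2+1)).const_mul (-2*j)).const_add
            (m (ℓ/2+1))
        exact this.hasDerivWithinAt
      exact eq_of_has_deriv_right_eq hd hd2
        (hcont.mono (Icc_subset_Icc (by linarith) le_rfl))
        (by fun_prop) (by simp)
    have h := hlinR ℓ ⟨by linarith, le_rfl⟩
    rw [hml] at h
    linear_combination -h
  -- lower barrier (needs j ≤ 0)
  have hlow : j ≤ 0 → ∀ x ∈ Icc (ℓ/2-1) (ℓ/2+1), 0 ≤ m x := by
    intro hj0
    have hb := barrier (F := fun y => -m y)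
      (F' := fun y => -(-2*j + β*lam*(1 - m y^2) * hfun (y - ℓ/2)))
      (a := ℓ/2-1) (b := ℓ/2+1) (L := 0) (δ := 1) (by linarith) one_pos
      ((hcont.mono (Icc_subset_Icc (by linarith) (by linarith))).neg)
      (fun y hy => ((mder y (Ico_subset_Icc_self hy)).neg).hasDerivWithinAt)
      (by show -m (ℓ/2-1) ≤ 0; rw [hα_eq]; nlinarith)
      (by
        intro y hy ε hε hεb heq
        have heq' : -m y = 0 + ε * Real.exp y := heq
        have hy1 := hy.1; have hy2 := hy.2
        have hh : 0 ≤ hfun (y - ℓ/2) := hfun_nonneg (by linarith) (by linarith)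
        have hey : Real.exp y ≤ Real.exp (ℓ/2+1) := Real.exp_le_exp.mpr (by linarith)
        have hmy : m y = -(ε * Real.exp y) := by linarith
        have hm1 : -1 ≤ m y := by
          have : ε * Real.exp y ≤ ε * Real.exp (ℓ/2+1) := by nlinarith
          rw [hmy]; linarith
        have hm2 : m y ≤ 0 := by rw [hmy]; nlinarith [Real.exp_pos y]
        have ht : 0 ≤ 1 - m y^2 := by nlinarith
        have hX : 0 ≤ β*lam*(1 - m y^2) * hfun (y - ℓ/2) :=
          mul_nonneg (mul_nonneg hbl.le ht) hh
        have hpos : 0 < ε * Real.exp y := by positivity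
        show -(-2*j + β*lam*(1 - m y^2) * hfun (y - ℓ/2)) < ε * Real.exp y
        linarith)
    intro x hx
    have h := hb x hx
    have h' : -m x ≤ 0 := h
    linarith
  -- upper barrier (needs 0 ≤ j)
  have hup : 0 ≤ j → ∀ x ∈ Icc (ℓ/2-1) (ℓ/2+1), m x ≤ 1 := by
    intro hj0
    exact barrier (F := m)
      (F' := fun y => -2*j + β*lam*(1 - m y^2) * hfun (y - ℓ/2))
      (a := ℓ/2-1) (b := ℓ/2+1) (L := 1) (δ := 1) (by linarith) one_pos
      (hcont.mono (Icc_subset_Icc (by linarith) (by linarith)))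
      (fun y hy => (mder y (Ico_subset_Icc_self hy)).hasDerivWithinAt)
      (by rw [hα_eq]; nlinarith)
      (by
        intro y hy ε hε hεb heq
        have hy1 := hy.1; have hy2 := hy.2
        have hh : 0 ≤ hfun (y - ℓ/2) := hfun_nonneg (by linarith) (by linarith)
        have hpos : 0 < ε * Real.exp y := by positivity
        have h1 : 1 ≤ m y := by rw [heq]; linarith
        have ht : 1 - m y^2 ≤ 0 := by nlinarith
        have hX : β*lam*(1 - m y^2) * hfun (y - ℓ/2) ≤ 0 := by
          nlinarith [mul_nonneg hbl.le hh]
        show -2*j + β*lam*(1 - m y^2) * hfun (y - ℓ/2) < ε * Real.exp y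
        linarith)
  -- no escape below -1 (needs 0 < j)
  have hnoesc : 0 < j → ∀ x₀ ∈ Icc (ℓ/2-1) (ℓ/2+1), ¬ (m x₀ < -1) := by
    intro hj x₀ hx₀ hlt
    have hδ : 0 < -1 - m x₀ := by linarith
    have hb := barrier (F := m)
      (F' := fun y => -2*j + β*lam*(1 - m y^2) * hfun (y - ℓ/2))
      (a := x₀) (b := ℓ/2+1) (L := m x₀) (δ := -1 - m x₀) hx₀.2 hδ
      (hcont.mono (Icc_subset_Icc (by linarith [hx₀.1]) (by linarith)))
      (fun y hy => (mder y ⟨by linarith [hy.1, hx₀.1], hy.2.le⟩).hasDerivWithinAt)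
      le_rfl
      (by
        intro y hy ε hε hεb heq
        have hy1 := hy.1; have hy2 := hy.2
        have hx01 := hx₀.1
        have hey : Real.exp y ≤ Real.exp (ℓ/2+1) := Real.exp_le_exp.mpr hy2.le
        have hle : m y ≤ -1 := by
          have : ε * Real.exp y ≤ ε * Real.exp (ℓ/2+1) := by nlinarith
          rw [heq]; linarith
        have ht : 1 - m y^2 ≤ 0 := by nlinarith
        have hh : 0 ≤ hfun (y - ℓ/2) := hfun_nonneg (by linarith) (by linarith)
        have hX : β*lam*(1 - m y^2) * hfun (y - ℓ/2) ≤ 0 := by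
          nlinarith [mul_nonneg hbl.le hh]
        have hpos : 0 < ε * Real.exp y := by positivity
        show -2*j + β*lam*(1 - m y^2) * hfun (y - ℓ/2) < ε * Real.exp y
        linarith)
    have h2 := hb (ℓ/2+1) ⟨hx₀.2, le_rfl⟩
    rw [hmc1] at h2
    nlinarith [mul_pos hj (show (0:ℝ) < ℓ/2-1 by linarith)]
  -- j is positive
  have hj : 0 < j := by
    rcases lt_trichotomy j 0 with hj0 | hj0 | hj0
    · exfalso
      have := hlow hj0.le (ℓ/2+1) ⟨by linarith, le_rfl⟩
      rw [hmc1] at this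
      nlinarith [mul_pos (neg_pos.mpr hj0) (show (0:ℝ) < ℓ/2-1 by linarith)]
    · exfalso
      subst hj0
      have hα0 : m (ℓ/2-1) = 0 := by rw [hα_eq]; ring
      have hmc10 : m (ℓ/2+1) = 0 := by rw [hmc1]; ring
      have hlow0 := hlow le_rfl
      have hup0 := hup le_rfl
      set F : ℝ → ℝ := fun x => -2*0 + β*lam*(1 - m x^2) * hfun (x - ℓ/2) with hFdef
      have mcont' : ContinuousOn m (Icc (ℓ/2-1) (ℓ/2+1)) :=
        hcont.mono (Icc_subset_Icc (by linarith) (by linarith))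
      have contF : ContinuousOn F (Icc (ℓ/2-1) (ℓ/2+1)) := by
        apply ContinuousOn.add continuousOn_const
        exact (continuousOn_const.mul (continuousOn_const.sub (mcont'.pow 2))).mul
          ((hfun_cont.comp (continuous_id.sub continuous_const)).continuousOn)
      have nonneg : ∀ y ∈ Icc (ℓ/2-1) (ℓ/2+1), 0 ≤ F y := by
        intro y hy
        have h1 := hlow0 y hy
        have h2 := hup0 y hy
        have hh : 0 ≤ hfun (y - ℓ/2) := hfun_nonneg (by linarith [hy.1]) (by linarith [hy.2])
        have ht : 0 ≤ 1 - m y^2 := by nlinarith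
        have := mul_nonneg (mul_nonneg hbl.le ht) hh
        show 0 ≤ -2*0 + β*lam*(1 - m y^2) * hfun (y - ℓ/2)
        linarith
      have hint : IntervalIntegrable F MeasureTheory.volume (ℓ/2-1) (ℓ/2+1) := by
        apply ContinuousOn.intervalIntegrable
        rwa [uIcc_of_le (by linarith)]
      have heq0 : ∫ x in (ℓ/2-1)..(ℓ/2+1), F x = m (ℓ/2+1) - m (ℓ/2-1) := by
        apply intervalIntegral.integral_eq_sub_of_hasDerivAt
        · intro x hx
          rw [uIcc_of_le (by linarith)] at hx
          exact mder x hx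
        · exact hint
      rw [hα0, hmc10] at heq0
      have hz : ∀ x ∈ Icc (ℓ/2-1) (ℓ/2+1), F x ≤ 0 := by
        intro x hx
        by_contra hFx
        push_neg at hFx
        have hpos := intervalIntegral.integral_pos (f := F) (a := ℓ/2-1) (b := ℓ/2+1)
          (by linarith) contF (fun y hy => nonneg y ⟨hy.1.le, hy.2⟩) ⟨x, hx, hFx⟩
        rw [heq0] at hpos
        norm_num at hpos
      have hsub : ∫ x in (ℓ/2-1)..(ℓ/2-1/2), F x = m (ℓ/2-1/2) - m (ℓ/2-1) := by
        apply intervalIntegral.integral_eq_sub_of_hasDerivAt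
        · intro x hx
          rw [uIcc_of_le (by linarith)] at hx
          exact mder x ⟨hx.1, by linarith [hx.2]⟩
        · apply hint.mono_set
          rw [uIcc_of_le (by linarith : (ℓ:ℝ)/2-1 ≤ ℓ/2-1/2),
            uIcc_of_le (by linarith : (ℓ:ℝ)/2-1 ≤ ℓ/2+1)]
          exact Icc_subset_Icc le_rfl (by linarith)
      have hzero : ∫ x in (ℓ/2-1)..(ℓ/2-1/2), F x = 0 := by
        rw [intervalIntegral.integral_congr (g := fun _ => (0:ℝ))
          (fun y hy => by
            rw [uIcc_of_le (by linarith)] at hy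
            exact le_antisymm (hz y ⟨hy.1, by linarith [hy.2]⟩)
              (nonneg y ⟨hy.1, by linarith [hy.2]⟩))]
        simp
      have hm_half : m (ℓ/2-1/2) = 0 := by
        rw [hzero] at hsub
        rw [hα0] at hsub
        linarith
      have hcontr := hz (ℓ/2-1/2) ⟨by linarith, by linarith⟩
      have hfv : hfun (ℓ/2-1/2 - ℓ/2) = 1/2 := by
        rw [show ℓ/2-1/2-ℓ/2 = -(1/2:ℝ) by ring]
        norm_num [hfun]
      rw [show F (ℓ/2-1/2) = -2*0 + β*lam*(1 - m (ℓ/2-1/2)^2) * hfun (ℓ/2-1/2 - ℓ/2) from rfl,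
        hm_half, hfv] at hcontr
      nlinarith
    · exact hj0
  -- bounds on m on the bump
  have hup1 := hup hj.le
  have hlow1 : ∀ x ∈ Icc (ℓ/2-1) (ℓ/2+1), -1 ≤ m x :=
    fun x hx => not_lt.mp (hnoesc hj x hx)
  -- properties of α = m(ℓ/2 - 1)
  have hαlt0 : m (ℓ/2-1) < 0 := by
    rw [hα_eq]
    nlinarith [mul_pos hj (show (0:ℝ) < ℓ/2-1 by linarith)]
  have hα1 : -1 < m (ℓ/2-1) := by
    rcases eq_or_lt_of_le (hlow1 (ℓ/2-1) ⟨le_rfl, by linarith⟩) with h | h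
    · exfalso
      have hder0 : HasDerivAt m (-2*j) (ℓ/2-1) := by
        have hd := mder (ℓ/2-1) ⟨le_rfl, by linarith⟩
        have : -2*j + β*lam*(1 - m (ℓ/2-1)^2) * hfun (ℓ/2-1 - ℓ/2) = -2*j := by
          rw [← h, show (ℓ:ℝ)/2-1 - ℓ/2 = -1 by ring]
          norm_num [hfun]
        rwa [this] at hd
      obtain ⟨y, hy1, hy2, hy3⟩ := exists_right_lt hder0 (by linarith)
        (show ℓ/2-1 < ℓ/2+1 by linarith)
      exact hnoesc hj y ⟨hy1.le, hy2.le⟩ (by rw [h]; exact hy3)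
    · exact h
  have hα2 : m (ℓ/2-1) < 1 := by linarith
  -- the comparison function u and its derivative
  have huder : ∀ t ∈ Icc (-1:ℝ) 1,
      HasDerivAt (fun s => m (ℓ/2 + s) - blayer β lam (m (ℓ/2-1)) s)
        ((-2*j + β*lam*(1 - m (ℓ/2+t)^2) * hfun t)
          - β*lam*(1 - (blayer β lam (m (ℓ/2-1)) t)^2) * hfun t) t := by
    intro t ht
    have h1 := mder (ℓ/2 + t) ⟨by linarith [ht.1], by linarith [ht.2]⟩
    rw [show ℓ/2 + t - ℓ/2 = t by ring] at h1
    have h2 := h1.comp t ((hasDerivAt_id t).const_add (ℓ/2))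
    simp only [Function.comp_def] at h2
    rw [mul_one] at h2
    exact h2.sub (hasDerivAt_blayer β lam (m (ℓ/2-1)) hα1 hα2 t)
  -- Gronwall
  have hgr := norm_le_gronwallBound_of_norm_deriv_right_le (δ := 0) (K := 2*(β*lam)) (ε := 2*j)
    (a := -1) (b := 1)
    (f := fun s => m (ℓ/2 + s) - blayer β lam (m (ℓ/2-1)) s)
    (f' := fun t => (-2*j + β*lam*(1 - m (ℓ/2+t)^2) * hfun t)
      - β*lam*(1 - (blayer β lam (m (ℓ/2-1)) t)^2) * hfun t)
    (fun t ht => (huder t ht).continuousAt.continuousWithinAt)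
    (fun t ht => (huder t (Ico_subset_Icc_self ht)).hasDerivWithinAt)
    (by
      show ‖m (ℓ/2 + (-1)) - blayer β lam (m (ℓ/2-1)) (-1)‖ ≤ 0
      rw [show (ℓ:ℝ)/2 + (-1) = ℓ/2 - 1 by ring, blayer_neg_one hα1 hα2]
      simp)
    (by
      intro t ht
      show ‖(-2*j + β*lam*(1 - m (ℓ/2+t)^2) * hfun t)
          - β*lam*(1 - (blayer β lam (m (ℓ/2-1)) t)^2) * hfun t‖
        ≤ 2*(β*lam) * ‖m (ℓ/2 + t) - blayer β lam (m (ℓ/2-1)) t‖ + 2*j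
      have hM1 : -1 ≤ m (ℓ/2+t) := hlow1 _ ⟨by linarith [ht.1], by linarith [ht.2.le]⟩
      have hM2 : m (ℓ/2+t) ≤ 1 := hup1 _ ⟨by linarith [ht.1], by linarith [ht.2.le]⟩
      have hA := abs_blayer_le_one β lam (m (ℓ/2-1)) t
      have hH0 : 0 ≤ hfun t := hfun_nonneg ht.1 ht.2.le
      have hH1 : hfun t ≤ 1 := hfun_le_one t
      rw [Real.norm_eq_abs, Real.norm_eq_abs]
      set M := m (ℓ/2+t) with hMdef
      set A := blayer β lam (m (ℓ/2-1)) t with hAdef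
      have hrw : (-2*j + β*lam*(1 - M^2) * hfun t) - β*lam*(1 - A^2) * hfun t
          = (-2*j) + (β*lam*hfun t)*((A - M)*(A + M)) := by ring
      rw [hrw]
      calc |(-2*j) + (β*lam*hfun t)*((A - M)*(A + M))|
          ≤ |(-2*j)| + |(β*lam*hfun t)*((A - M)*(A + M))| := abs_add_le _ _
        _ ≤ 2*(β*lam) * |M - A| + 2*j := by
            have e1 : |(-2*j)| = 2*j := by rw [abs_of_nonpos (by linarith)]; ring
            have e2 : |(β*lam*hfun t)*((A - M)*(A + M))| ≤ 2*(β*lam) * |M - A| := by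
              rw [abs_mul, abs_mul (A - M) (A + M)]
              have f1 : |β*lam*hfun t| ≤ β*lam := by
                rw [abs_of_nonneg (by positivity)]
                calc β*lam*hfun t ≤ β*lam*1 := mul_le_mul_of_nonneg_left hH1 hbl.le
                  _ = β*lam := mul_one _
              have f2 : |A - M| = |M - A| := abs_sub_comm _ _
              have f3 : |A + M| ≤ 2 := by
                have h4 := abs_add_le A M
                have hMa : |M| ≤ 1 := abs_le.mpr ⟨hM1, hM2⟩
                linarith
              calc |β*lam*hfun t| * (|A - M| * |A + M|)
                  ≤ (β*lam) * (|A - M| * |A + M|) :=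
                    mul_le_mul_of_nonneg_right f1 (by positivity)
                _ ≤ (β*lam) * (|M - A| * 2) := by
                    rw [f2]
                    exact mul_le_mul_of_nonneg_left
                      (mul_le_mul_of_nonneg_left f3 (abs_nonneg _)) hbl.le
                _ = 2*(β*lam) * |M - A| := by ring
            linarith
        _ = 2*(β*lam) * |M - A| + 2*j := by ring)
  intro x hx
  have hbound := hgr x hx
  rw [Real.norm_eq_abs] at hbound
  refine le_trans hbound ?_
  have hKne : (2*(β*lam)) ≠ 0 := by positivity
  rw [gronwallBound_of_K_ne_0 hKne]
  have hexple : Real.exp (2*(β*lam)*(x - (-1))) ≤ Real.exp (4*β*lam) := by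
    apply Real.exp_le_exp.mpr
    nlinarith [hx.2, hx.1]
  have h1 : 2*j/(2*(β*lam)) = j/(β*lam) := by
    field_simp
  have h2 : (0:ℝ) ≤ j/(β*lam) := by positivity
  calc (0:ℝ) * Real.exp (2*(β*lam)*(x - (-1)))
        + 2*j/(2*(β*lam)) * (Real.exp (2*(β*lam)*(x - (-1))) - 1)
      = j/(β*lam) * (Real.exp (2*(β*lam)*(x - (-1))) - 1) := by rw [h1]; ring
    _ ≤ j/(β*lam) * Real.exp (4*β*lam) := by
        apply mul_le_mul_of_nonneg_left _ h2
        linarith [hexple]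
    _ = j / (β * lam) * Real.exp (4 * β * lam) := by ring
end
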